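/- Let n ≥ 1, k ≥ 3, identify A_2 = {a_0,a_1} ⊆ A_k = {a_0,...,a_{k−1}}, and let A_{[1,k[} = {a_1,...,a_{k−1}} and A_{[2,k[} = {a_2,...,a_{k−1}}. Let X_{i=1}^n P_i be a finite maximal product code in nA_2^* (each P_i a finite maximal prefix code of A_2^*). Then the finite set X_{i=1}^n ( a_1·P_i ∪ spref(a_1·P_i)·A_{[2,k[} ) ⊆ nA_k^* is end-equivalent to nA_{[1,k[}, the set of n-tuples of letters from {a_1,...,a_{k−1}}. -/

import Mathlib

/-- A prefix code: no element is a strict prefix of another. -/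
def PrefixCode {A : Type*} (P : Set (List A)) : Prop :=
  ∀ p ∈ P, ∀ q ∈ P, p <+: q → p = q

/-- A maximal prefix code of the sub-free-monoid `L` (e.g. `A_2^* ⊆ A_k^*`). -/
def MaxPrefixCodeOn {A : Type*} (L P : Set (List A)) : Prop :=
  P ⊆ L ∧ PrefixCode P ∧ ∀ Q : Set (List A), Q ⊆ L → PrefixCode Q → P ⊆ Q → P = Q

/-- `A_2^*` viewed inside `A_k^*`: strings using only the letters `a_0, a_1`. -/
def Str2 (k : ℕ) : Set (List (Fin k)) :=
  {w | ∀ a ∈ w, (a : ℕ) < 2}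

/-- The set of strict prefixes of elements of `P`. -/
def spref {A : Type*} (P : Set (List A)) : Set (List A) :=
  {x | ∃ p ∈ P, x <+: p ∧ x ≠ p}

/-- `P ∪ spref(P)·A_{[2,k[}`. -/
def extd {k : ℕ} (P : Set (List (Fin k))) : Set (List (Fin k)) :=
  P ∪ {w | ∃ x ∈ spref P, ∃ b : Fin k, 2 ≤ (b : ℕ) ∧ w = x ++ [b]}

/-- `a_1·P = {a_1 p : p ∈ P}`. -/
def a1mul {k : ℕ} (hk : 3 ≤ k) (P : Set (List (Fin k))) : Set (List (Fin k)) :=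
  (fun w => (⟨1, by omega⟩ : Fin k) :: w) '' P

/-- The right ideal `C · nA^*` generated by a set `C ⊆ nA^*`. -/
def RIdeal {A : Type*} {n : ℕ} (C : Set (Fin n → List A)) : Set (Fin n → List A) :=
  {x | ∃ c ∈ C, ∃ w : Fin n → List A, x = fun i => c i ++ w i}

/-- A right ideal of `nA^*`: a set `R` with `R·nA^* = R`. -/
def IsRightIdeal {A : Type*} {n : ℕ} (R : Set (Fin n → List A)) : Prop :=
  ∀ r ∈ R, ∀ w : Fin n → List A, (fun i => r i ++ w i) ∈ R

/-- End-equivalence of finite sets `X, Y ⊆ nA^*`: for every right ideal `R`,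
`R ∩ X·nA^* = ∅ ↔ R ∩ Y·nA^* = ∅`. -/
def EndEquiv {A : Type*} {n : ℕ} (X Y : Set (Fin n → List A)) : Prop :=
  ∀ R : Set (Fin n → List A), IsRightIdeal R →
    (R ∩ RIdeal X = ∅ ↔ R ∩ RIdeal Y = ∅)

lemma maxP_nonempty {k : ℕ} {P : Set (List (Fin k))}
    (h : MaxPrefixCodeOn (Str2 k) P) : P.Nonempty := by
  by_contra h0
  rw [Set.not_nonempty_iff_eq_empty] at h0
  have hQ := h.2.2 {([] : List (Fin k))} ?_ ?_ ?_
  · rw [h0] at hQ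
    exact absurd hQ.symm (by simp)
  · intro x hx
    simp only [Set.mem_singleton_iff] at hx
    subst hx
    intro a ha
    simp at ha
  · intro p hp q hq _
    simp only [Set.mem_singleton_iff] at hp hq
    rw [hp, hq]
  · rw [h0]; exact Set.empty_subset _

lemma maxP_comp {k : ℕ} {P : Set (List (Fin k))}
    (h : MaxPrefixCodeOn (Str2 k) P) {s : List (Fin k)} (hs : s ∈ Str2 k) :
    ∃ p ∈ P, p <+: s ∨ s <+: p := by
  by_contra h0
  push_neg at h0
  have hQ := h.2.2 (insert s P) ?_ ?_ (Set.subset_insert _ _)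
  · have hsP : s ∈ P := hQ ▸ Set.mem_insert s P
    exact (h0 s hsP).1 (List.prefix_refl s)
  · intro x hx
    rcases hx with rfl | hx
    · exact hs
    · exact h.1 hx
  · intro p hp q hq hpq
    rcases hp with rfl | hp <;> rcases hq with rfl | hq
    · rfl
    · exact absurd hpq (h0 q hq).2
    · exact absurd hpq (h0 p hp).1
    · exact h.2.1 p hp q hq hpq

lemma extd_head {k : ℕ} (hk : 3 ≤ k) {P : Set (List (Fin k))} {e : List (Fin k)}
    (he : e ∈ extd (a1mul hk P)) :
    ∃ (a : Fin k) (t : List (Fin k)), 1 ≤ (a : ℕ) ∧ e = a :: t := by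
  rcases he with ⟨p, hp, rfl⟩ | ⟨x, ⟨q, ⟨p, hp, rfl⟩, hxq, hxne⟩, b, hb, rfl⟩
  · exact ⟨_, p, by simp, rfl⟩
  · cases x with
    | nil => exact ⟨b, [], by omega, rfl⟩
    | cons c x' =>
      have hc := (List.cons_prefix_cons.mp hxq).1
      exact ⟨c, x' ++ [b], by simp [hc], rfl⟩

lemma dropWhile_head_false {α : Type*} (p : α → Bool) (l : List α) {c : α} {d' : List α}
    (h : l.dropWhile p = c :: d') : p c = false := by
  induction l with
  | nil => simp at h
  | cons a l ih =>
    rw [List.dropWhile_cons] at h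
    by_cases hpa : p a = true
    · rw [if_pos hpa] at h; exact ih h
    · rw [if_neg hpa] at h
      injection h with h1 _
      subst h1
      simpa using hpa

lemma comp_lemma {k : ℕ} (hk : 3 ≤ k) {P : Set (List (Fin k))}
    (h : MaxPrefixCodeOn (Str2 k) P) (a : Fin k) (ha : 1 ≤ (a : ℕ))
    (t : List (Fin k)) :
    ∃ w, ∃ e ∈ extd (a1mul hk P), e <+: (a :: t) ++ w := by
  obtain ⟨p0, hp0⟩ := maxP_nonempty h
  by_cases h2 : 2 ≤ (a : ℕ)
  · refine ⟨[], [a], Or.inr ⟨[], ⟨(⟨1, by omega⟩ : Fin k) :: p0, ⟨p0, hp0, rfl⟩,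
      List.nil_prefix, by simp⟩, a, h2, rfl⟩, ⟨t ++ [], rfl⟩⟩
  · have ha1 : a = (⟨1, by omega⟩ : Fin k) := Fin.ext (by simp only [Fin.val_mk]; omega)
    rw [ha1]
    obtain ⟨s, hs_def⟩ : ∃ s, s = t.takeWhile (fun c : Fin k => decide ((c : ℕ) < 2)) :=
      ⟨_, rfl⟩
    have hsStr : s ∈ Str2 k := by
      intro c hc
      rw [hs_def] at hc
      have := List.mem_takeWhile_imp hc
      simpa using this
    have hspre : s <+: t := hs_def ▸ List.takeWhile_prefix _
    obtain ⟨p, hp, hcomp⟩ := maxP_comp h hsStr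
    by_cases hps : p <+: s
    · refine ⟨[], _, Or.inl ⟨p, hp, rfl⟩, ?_⟩
      simp only [List.append_nil]
      exact List.cons_prefix_cons.mpr ⟨rfl, hps.trans hspre⟩
    · have hsp : s <+: p := hcomp.resolve_left hps
      have hne : s ≠ p := by rintro rfl; exact hps (List.prefix_refl s)
      have hsprefmem : ((⟨1, by omega⟩ : Fin k) :: s) ∈ spref (a1mul hk P) :=
        ⟨(⟨1, by omega⟩ : Fin k) :: p, ⟨p, hp, rfl⟩,
          List.cons_prefix_cons.mpr ⟨rfl, hsp⟩, by simp [hne]⟩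
      by_cases hst : s = t
      · obtain ⟨r, hr⟩ := hsp
        refine ⟨r, _, Or.inl ⟨p, hp, rfl⟩, ⟨[], ?_⟩⟩
        subst hst
        simp [← hr]
      · have hd : t.dropWhile (fun c : Fin k => decide ((c : ℕ) < 2)) ≠ [] := by
          intro h0
          apply hst
          have h1 := List.takeWhile_append_dropWhile (p := fun c : Fin k => decide ((c : ℕ) < 2)) (l := t)
          rw [h0, List.append_nil] at h1
          rw [hs_def, h1]
        obtain ⟨c, d', hcd⟩ := List.exists_cons_of_ne_nil hd
        have hc2 : 2 ≤ (c : ℕ) := by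
          have h1 := dropWhile_head_false (fun c : Fin k => decide ((c : ℕ) < 2)) t hcd
          simp only [decide_eq_false_iff_not, not_lt] at h1
          exact h1
        have ht : t = s ++ c :: d' := by
          conv_lhs => rw [← List.takeWhile_append_dropWhile (p := fun c : Fin k => decide ((c : ℕ) < 2)) (l := t)]
          rw [← hs_def, hcd]
        refine ⟨[], ((⟨1, by omega⟩ : Fin k) :: s) ++ [c],
          Or.inr ⟨_, hsprefmem, c, hc2, rfl⟩, ⟨d', ?_⟩⟩
        simp [ht]

/-- If `X_i P_i` is a finite maximal product code in `n(A_2)^*` (each `P_i` a finite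
maximal prefix code of `A_2^*`), then `X_i (a_1·P_i ∪ spref(a_1·P_i)·A_{[2,k[})` is
end-equivalent to `nA_{[1,k[}`, the set of `n`-tuples of letters from `{a_1,...,a_{k-1}}`. -/
theorem stmt_18 {n k : ℕ} (hn : 1 ≤ n) (hk : 3 ≤ k)
    (P : Fin n → Set (List (Fin k)))
    (hfin : ∀ i, (P i).Finite)
    (hP : ∀ i, MaxPrefixCodeOn (Str2 k) (P i)) :
    EndEquiv {u : Fin n → List (Fin k) | ∀ i, u i ∈ extd (a1mul hk (P i))}
      {u : Fin n → List (Fin k) | ∀ i, ∃ a : Fin k, 1 ≤ (a : ℕ) ∧ u i = [a]} := by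
  intro R hR
  constructor
  · -- R ∩ X·nA* = ∅ → R ∩ Y·nA* = ∅
    intro hX
    rw [Set.eq_empty_iff_forall_notMem] at hX ⊢
    rintro r ⟨hrR, c, hcY, w, rfl⟩
    choose a ha hca using hcY
    have hcomp : ∀ i, ∃ w', ∃ e ∈ extd (a1mul hk (P i)), e <+: ((a i) :: w i) ++ w' :=
      fun i => comp_lemma hk (hP i) (a i) (ha i) (w i)
    choose W e he hpre using hcomp
    have hrest : ∀ i, ∃ t, e i ++ t = ((a i) :: w i) ++ W i := fun i => hpre i
    choose rest hrest using hrest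
    refine hX (fun i => (c i ++ w i) ++ W i) ⟨hR _ hrR W, e, he, rest, funext fun i => ?_⟩
    rw [hca i]
    exact (hrest i).symm
  · intro hY
    have hsub : RIdeal {u : Fin n → List (Fin k) | ∀ i, u i ∈ extd (a1mul hk (P i))} ⊆
        RIdeal {u : Fin n → List (Fin k) | ∀ i, ∃ a : Fin k, 1 ≤ (a : ℕ) ∧ u i = [a]} := by
      rintro x ⟨c, hc, w, rfl⟩
      choose a t ha hca using fun i => extd_head hk (hc i)
      exact ⟨fun i => [a i], fun i => ⟨a i, ha i, rfl⟩, fun i => t i ++ w i,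
        funext fun i => by rw [hca i]; simp⟩
    exact Set.subset_empty_iff.mp (hY ▸ Set.inter_subset_inter_right R hsub)
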